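/- There exists a coherent instance of proxy selection with 8 voters, 4 proposals, and majority agreement (k = 0), in which for every possible advertised type of a single dRep the elected proposal has intrinsic score at most 5, while the optimal intrinsic score is 8. Hence a single dRep cannot achieve an approximation ratio better than 8/5 = 1.6, even on coherent instances with majority agreement. -/
import Mathlib


open Finset

/-- An instance of proxy selection: `intrinsic i j` is voter `i`'s intrinsic approval of
proposal `j`; `visible i j` records whether this preference is revealed to the voter
(the revealed preference is `some (intrinsic i j)` if visible and `⊥` otherwise). -/
structure PSInstance (n m : ℕ) where
  intrinsic : Fin n → Fin m → Bool
  visible : Fin n → Fin m → Bool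

namespace PSInstance

variable {n m : ℕ}

/-- Revealed preference of voter `i` on proposal `j`. -/
def revealed (I : PSInstance n m) (i : Fin n) (j : Fin m) : Option Bool :=
  if I.visible i j then some (I.intrinsic i j) else none

/-- The revealed set `R_i` of voter `i`. -/
def Rset (I : PSInstance n m) (i : Fin n) : Finset (Fin m) :=
  univ.filter fun j => I.visible i j

/-- `m_i = |R_i|`. -/
def mi (I : PSInstance n m) (i : Fin n) : ℕ := (I.Rset i).card

/-- Hamming distance between voter `i`'s revealed ballot and type `t`, restricted to `R_i`. -/
def dist (I : PSInstance n m) (i : Fin n) (t : Fin m → Bool) : ℕ :=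
  (univ.filter fun j => I.visible i j ∧ I.intrinsic i j ≠ t j).card

/-- Voter `i` (with reluctance parameter `k`) is attracted by a dRep of type `t`. -/
def Attracted (I : PSInstance n m) (k : ℕ) (i : Fin n) (t : Fin m → Bool) : Prop :=
  I.dist i t ≤ (I.mi i - k) / 2

instance (I : PSInstance n m) (k : ℕ) (i : Fin n) (t : Fin m → Bool) :
    Decidable (I.Attracted k i t) := by unfold Attracted; exact inferInstance

/-- Intrinsic approval score of proposal `j`. -/
def sc (I : PSInstance n m) (j : Fin m) : ℕ :=
  (univ.filter fun i => I.intrinsic i j = true).card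

/-- Revealed approval score of proposal `j`. -/
def rsc (I : PSInstance n m) (j : Fin m) : ℕ :=
  (univ.filter fun i => I.visible i j ∧ I.intrinsic i j = true).card

/-- `j` is an intrinsically optimal proposal (`win(P)`). -/
def IsOpt (I : PSInstance n m) (j : Fin m) : Prop := ∀ j', I.sc j' ≤ I.sc j

/-- Total score of proposal `j` given a family `D` of dReps and a delegation assignment
`deleg` (delegating voters contribute through their dRep's ballot, the rest vote their
revealed preferences directly). -/
def totalScore {ι : Type} (I : PSInstance n m) (D : ι → Fin m → Bool)
    (deleg : Fin n → Option ι) (j : Fin m) : ℕ :=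
  (univ.filter fun i => (match deleg i with
    | some d => D d j
    | none => I.visible i j && I.intrinsic i j) = true).card

/-- A delegation assignment is valid (w.r.t. per-voter reluctance parameters `k`) if every
delegating voter is attracted by their chosen dRep, and every voter attracted by at least
one dRep delegates (to an arbitrary one of them). -/
def ValidDeleg {ι : Type} (I : PSInstance n m) (k : Fin n → ℕ) (D : ι → Fin m → Bool)
    (deleg : Fin n → Option ι) : Prop :=
  (∀ i d, deleg i = some d → I.Attracted (k i) i (D d)) ∧
  (∀ i, (∃ d, I.Attracted (k i) i (D d)) → deleg i ≠ none)

/-- `j` is elected: it maximizes total score, ties broken in favor of maximum intrinsic score. -/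
def Elected {ι : Type} (I : PSInstance n m) (D : ι → Fin m → Bool)
    (deleg : Fin n → Option ι) (j : Fin m) : Prop :=
  (∀ j', I.totalScore D deleg j' ≤ I.totalScore D deleg j) ∧
  (∀ j', I.totalScore D deleg j' = I.totalScore D deleg j → I.sc j' ≤ I.sc j)

/-- `j` is elected when ties are broken in favor of maximum *revealed* score. -/
def ElectedRev {ι : Type} (I : PSInstance n m) (D : ι → Fin m → Bool)
    (deleg : Fin n → Option ι) (j : Fin m) : Prop :=
  (∀ j', I.totalScore D deleg j' ≤ I.totalScore D deleg j) ∧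
  (∀ j', I.totalScore D deleg j' = I.totalScore D deleg j → I.rsc j' ≤ I.rsc j)

end PSInstance

/-- There is a coherent instance with 8 voters, 4 proposals and majority
agreement (`k = 0`) in which the optimal intrinsic score is 8, yet for every single dRep
the elected proposal has intrinsic score at most 5 (so no better than 1.6-approximation). -/

instance {n m : ℕ} (I : PSInstance n m) (j : Fin m) : Decidable (I.IsOpt j) := by
  unfold PSInstance.IsOpt; exact inferInstance

instance {n m : ℕ} {ι : Type} [Fintype ι] [DecidableEq ι] (I : PSInstance n m)
    (k : Fin n → ℕ) (D : ι → Fin m → Bool) (deleg : Fin n → Option ι) :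
    Decidable (I.ValidDeleg k D deleg) := by
  unfold PSInstance.ValidDeleg; exact inferInstance

instance {n m : ℕ} {ι : Type} (I : PSInstance n m) (D : ι → Fin m → Bool)
    (deleg : Fin n → Option ι) (j : Fin m) : Decidable (I.Elected D deleg j) := by
  unfold PSInstance.Elected; exact inferInstance

def myIntr : Fin 8 → Fin 4 → Bool :=
  ![![true, true, true, false],
    ![true, true, false, true],
    ![true, false, true, true],
    ![true, true, false, false],
    ![true, false, true, false],
    ![true, false, false, true],
    ![true, true, true, true],
    ![true, true, true, true]]

def myI : PSInstance 8 4 :=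
  { intrinsic := myIntr, visible := fun _ j => !(j == 0) }

set_option maxRecDepth 100000 in
set_option maxHeartbeats 4000000 in
theorem stmt4 :
    ∃ I : PSInstance 8 4,
      (∀ i i' : Fin 8, I.Rset i = I.Rset i') ∧
      (∃ j, I.IsOpt j ∧ I.sc j = 8) ∧
      ∀ t : Fin 4 → Bool, ∀ deleg : Fin 8 → Option Unit,
        I.ValidDeleg (fun _ => 0) (fun _ => t) deleg →
        ∀ j, I.Elected (fun _ => t) deleg j → I.sc j ≤ 5 := by
  exact ⟨myI, by decide, ⟨0, by decide, by decide⟩, by decide⟩
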